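/- Let W > 0. Then the (improper) integral ∫ over z ∈ (−1,0) of √((1+z+W)/(1+z)) dz equals √(1+W) + W·log(1 + √(1+W)) − (1/2)·W·log W. In particular the integrand is integrable on (−1,0). -/

import Mathlib

open MeasureTheory

noncomputable def Faux (W u : ℝ) : ℝ :=
  Real.sqrt (u * (u + W)) + W * Real.log (Real.sqrt u + Real.sqrt (u + W))

lemma Faux_deriv (W : ℝ) (hW : 0 < W) {u : ℝ} (hu : 0 < u) :
    HasDerivAt (Faux W) (Real.sqrt ((u + W) / u)) u := by
  have huW : 0 < u + W := by linarith
  have ha : 0 < Real.sqrt u := Real.sqrt_pos.2 hu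
  have hb : 0 < Real.sqrt (u + W) := Real.sqrt_pos.2 huW
  have hg : HasDerivAt (fun u : ℝ => u * (u + W)) (2 * u + W) u := by
    have h : HasDerivAt (fun u : ℝ => u * (u + W)) (1 * (u + W) + u * 1) u :=
      (hasDerivAt_id u).mul ((hasDerivAt_id u).add_const W)
    simp only [id_eq, one_mul, mul_one] at h
    convert h using 1; ring
  have hmul : 0 < u * (u + W) := mul_pos hu huW
  have h1 : HasDerivAt (fun u : ℝ => Real.sqrt (u * (u + W)))
      (1 / (2 * Real.sqrt (u * (u + W))) * (2 * u + W)) u :=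
    (Real.hasDerivAt_sqrt hmul.ne').comp u hg
  have hbW : HasDerivAt (fun u : ℝ => Real.sqrt (u + W))
      (1 / (2 * Real.sqrt (u + W)) * 1) u :=
    (Real.hasDerivAt_sqrt huW.ne').comp u ((hasDerivAt_id u).add_const W)
  have h2 : HasDerivAt (fun u : ℝ => Real.sqrt u + Real.sqrt (u + W))
      (1 / (2 * Real.sqrt u) + 1 / (2 * Real.sqrt (u + W)) * 1) u :=
    (Real.hasDerivAt_sqrt hu.ne').add hbW
  have hsum : Real.sqrt u + Real.sqrt (u + W) ≠ 0 := by positivity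
  have h3 : HasDerivAt (fun u : ℝ => Real.log (Real.sqrt u + Real.sqrt (u + W)))
      ((Real.sqrt u + Real.sqrt (u + W))⁻¹ *
        (1 / (2 * Real.sqrt u) + 1 / (2 * Real.sqrt (u + W)) * 1)) u :=
    by have := (Real.hasDerivAt_log hsum).comp u h2; exact this
  have hF : HasDerivAt (Faux W)
      (1 / (2 * Real.sqrt (u * (u + W))) * (2 * u + W) +
        W * ((Real.sqrt u + Real.sqrt (u + W))⁻¹ *
          (1 / (2 * Real.sqrt u) + 1 / (2 * Real.sqrt (u + W)) * 1))) u :=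
    h1.add (h3.const_mul W)
  have hkey : 1 / (2 * Real.sqrt (u * (u + W))) * (2 * u + W) +
      W * ((Real.sqrt u + Real.sqrt (u + W))⁻¹ *
        (1 / (2 * Real.sqrt u) + 1 / (2 * Real.sqrt (u + W)) * 1)) =
      Real.sqrt ((u + W) / u) := by
    rw [Real.sqrt_div huW.le, Real.sqrt_mul hu.le]
    set a := Real.sqrt u with hadef
    set b := Real.sqrt (u + W) with hbdef
    have ha2 : a ^ 2 = u := Real.sq_sqrt hu.le
    have hb2 : b ^ 2 = u + W := Real.sq_sqrt huW.le
    have hWab : W = b ^ 2 - a ^ 2 := by linarith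
    have hUab : u = a ^ 2 := ha2.symm
    rw [hWab, hUab]
    have hab : a + b ≠ 0 := by positivity
    field_simp
    ring
  rw [← hkey]
  exact hF

lemma key_interval (W : ℝ) (hW : 0 < W) :
    IntervalIntegrable (fun u : ℝ => Real.sqrt ((u + W) / u)) volume 0 1 ∧
    ∫ u in (0:ℝ)..1, Real.sqrt ((u + W) / u) =
      Real.sqrt (1 + W) + W * Real.log (1 + Real.sqrt (1 + W))
        - (1 / 2) * W * Real.log W := by
  have hint : IntervalIntegrable (fun u : ℝ => Real.sqrt ((u + W) / u)) volume 0 1 := by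
    have hmaj : IntervalIntegrable (fun u : ℝ => Real.sqrt (1 + W) * u ^ (-(1:ℝ)/2))
        volume 0 1 :=
      (intervalIntegral.intervalIntegrable_rpow' (by norm_num)).const_mul _
    rw [intervalIntegrable_iff_integrableOn_Ioc_of_le (by norm_num : (0:ℝ) ≤ 1)] at hmaj ⊢
    refine hmaj.mono' ?_ ?_
    · exact ((measurable_id.add_const W).div measurable_id).sqrt.aestronglyMeasurable
    · rw [ae_restrict_iff' measurableSet_Ioc]
      filter_upwards with u hu
      obtain ⟨hu0, hu1⟩ := hu
      have h1 : Real.sqrt ((u + W) / u) ≤ Real.sqrt ((1 + W) / u) := by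
        apply Real.sqrt_le_sqrt
        gcongr
      have h2 : Real.sqrt ((1 + W) / u) = Real.sqrt (1 + W) * u ^ (-(1:ℝ)/2) := by
        rw [Real.sqrt_div (by linarith : (0:ℝ) ≤ 1 + W), div_eq_mul_inv]
        congr 1
        rw [Real.sqrt_eq_rpow, ← Real.rpow_neg hu0.le]
        norm_num
      rw [Real.norm_eq_abs, abs_of_nonneg (Real.sqrt_nonneg _)]
      calc Real.sqrt ((u + W) / u) ≤ Real.sqrt ((1 + W) / u) := h1
        _ = _ := h2
  refine ⟨hint, ?_⟩
  have hcont : ContinuousOn (Faux W) (Set.Icc 0 1) := by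
    apply ContinuousOn.add
    · exact (Real.continuous_sqrt.comp
        (continuous_id.mul (continuous_id.add continuous_const))).continuousOn
    · apply ContinuousOn.mul continuousOn_const
      apply ContinuousOn.log
      · exact ((Real.continuous_sqrt).add
          (Real.continuous_sqrt.comp (continuous_id.add continuous_const))).continuousOn
      · intro x hx
        have hb : 0 < Real.sqrt (x + W) := Real.sqrt_pos.2 (by linarith [hx.1])
        positivity
  have heq := intervalIntegral.integral_eq_sub_of_hasDeriv_right_of_le (by norm_num : (0:ℝ) ≤ 1)
    hcont (fun x hx => (Faux_deriv W hW hx.1).hasDerivWithinAt) hint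
  rw [heq]
  unfold Faux
  simp only [zero_mul, Real.sqrt_zero, zero_add, one_mul, Real.sqrt_one]
  rw [Real.log_sqrt hW.le]
  ring

theorem stmt_1 (W : ℝ) (hW : 0 < W) :
    IntegrableOn (fun z : ℝ => Real.sqrt ((1 + z + W) / (1 + z))) (Set.Ioo (-1 : ℝ) 0) volume ∧
    ∫ z in Set.Ioo (-1 : ℝ) 0, Real.sqrt ((1 + z + W) / (1 + z)) =
      Real.sqrt (1 + W) + W * Real.log (1 + Real.sqrt (1 + W))
        - (1 / 2) * W * Real.log W := by
  obtain ⟨hint, hval⟩ := key_interval W hW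
  have hfun : (fun z : ℝ => Real.sqrt ((1 + z + W) / (1 + z))) =
      (fun z : ℝ => Real.sqrt (((z + 1) + W) / (z + 1))) := by
    funext z; ring_nf
  have hci : IntervalIntegrable (fun z : ℝ => Real.sqrt ((1 + z + W) / (1 + z)))
      volume (-1) 0 := by
    rw [hfun]
    have := hint.comp_add_right 1
    norm_num at this
    exact this
  constructor
  · exact ((intervalIntegrable_iff_integrableOn_Ioc_of_le (by norm_num : (-1:ℝ) ≤ 0)).1
      hci).mono_set Set.Ioo_subset_Ioc_self
  · rw [← integral_Ioc_eq_integral_Ioo,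
      ← intervalIntegral.integral_of_le (by norm_num : (-1:ℝ) ≤ 0)]
    have h := intervalIntegral.integral_comp_add_right (a := (-1:ℝ)) (b := 0)
      (fun u : ℝ => Real.sqrt ((u + W) / u)) 1
    norm_num at h
    rw [hfun, h, hval]
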